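/- For the cycletree numbering combined with routing: since the numbers assigned to any subtree by any of the four numbering modes starting at counter c form the contiguous interval [c, c + size t), at every node of the routed tree one has max − min + 1 = size of that node's subtree. -/
import Mathlib


namespace Retreet

inductive BTree where
  | nil : BTree
  | node : BTree → BTree → BTree

inductive LTree where
  | lnil : LTree
  | lnode : Nat → LTree → LTree → LTree

inductive RTree where
  | rnil : RTree
  | rnode : Nat → Nat → Nat → RTree → RTree → RTree

mutual
def rootMode : BTree → Nat → LTree × Nat
  | .nil, c => (.lnil, c)
  | .node l r, c =>
      let (l', c1) := preMode l (c + 1)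
      let (r', c2) := postMode r c1
      (.lnode c l' r', c2)
def preMode : BTree → Nat → LTree × Nat
  | .nil, c => (.lnil, c)
  | .node l r, c =>
      let (l', c1) := preMode l (c + 1)
      let (r', c2) := inMode r c1
      (.lnode c l' r', c2)
def inMode : BTree → Nat → LTree × Nat
  | .nil, c => (.lnil, c)
  | .node l r, c =>
      let (l', c1) := postMode l c
      let (r', c2) := preMode r (c1 + 1)
      (.lnode c1 l' r', c2)
def postMode : BTree → Nat → LTree × Nat
  | .nil, c => (.lnil, c)
  | .node l r, c =>
      let (l', c1) := inMode l c
      let (r', c2) := postMode r c1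
      (.lnode c2 l' r', c2 + 1)
end

def mnOf : RTree → Nat → Nat
  | .rnil, d => d
  | .rnode _ mn _ _ _, _ => mn

def mxOf : RTree → Nat → Nat
  | .rnil, d => d
  | .rnode _ _ mx _ _, _ => mx

def computeRouting : LTree → RTree
  | .lnil => .rnil
  | .lnode n l r =>
      let l' := computeRouting l
      let r' := computeRouting r
      .rnode n (min n (min (mnOf l' n) (mnOf r' n)))
               (max n (max (mxOf l' n) (mxOf r' n))) l' r'

def rsize : RTree → Nat
  | .rnil => 0
  | .rnode _ _ _ l r => rsize l + rsize r + 1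

/-- At every node of the routed tree, `mx - mn + 1` equals the size of the
    subtree rooted at that node. -/
def extremaSpanSize : RTree → Prop
  | .rnil => True
  | .rnode n mn mx l r =>
      mx - mn + 1 = rsize (.rnode n mn mx l r) ∧ extremaSpanSize l ∧ extremaSpanSize r


def bsize : BTree → Nat
  | .nil => 0
  | .node l r => bsize l + bsize r + 1

def Spec (p : LTree × Nat) (t : BTree) (c : Nat) : Prop :=
  p.2 = c + bsize t ∧
  rsize (computeRouting p.1) = bsize t ∧
  (∀ d, mnOf (computeRouting p.1) d = if bsize t = 0 then d else c) ∧
  (∀ d, mxOf (computeRouting p.1) d = if bsize t = 0 then d else c + bsize t - 1) ∧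
  extremaSpanSize (computeRouting p.1)

lemma main_spec : ∀ t : BTree, ∀ c : Nat,
    Spec (rootMode t c) t c ∧ Spec (preMode t c) t c ∧
    Spec (inMode t c) t c ∧ Spec (postMode t c) t c := by
  intro t
  induction t with
  | nil =>
      intro c
      simp [Spec, rootMode, preMode, inMode, postMode, computeRouting,
            mnOf, mxOf, rsize, extremaSpanSize, bsize]
  | node l r ihl ihr =>
      intro c
      refine ⟨?_, ?_, ?_, ?_⟩
      · -- rootMode
        obtain ⟨hl1, hl2, hl3, hl4, hl5⟩ := (ihl (c+1)).2.1
        obtain ⟨hr1, hr2, hr3, hr4, hr5⟩ := (ihr (preMode l (c+1)).2).2.2.2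
        simp only [Spec, rootMode, computeRouting, bsize, mnOf, mxOf, rsize,
          extremaSpanSize] at *
        refine ⟨by omega, by omega, ?_, ?_, ?_, hl5, hr5⟩
        · intro d; rw [hl3, hr3]; split_ifs <;> (try contradiction) <;> omega
        · intro d; rw [hl4, hr4]; split_ifs <;> (try contradiction) <;> omega
        · rw [hl3, hl4, hr3, hr4]; split_ifs <;> (try contradiction) <;> omega
      · -- preMode
        obtain ⟨hl1, hl2, hl3, hl4, hl5⟩ := (ihl (c+1)).2.1
        obtain ⟨hr1, hr2, hr3, hr4, hr5⟩ := (ihr (preMode l (c+1)).2).2.2.1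
        simp only [Spec, preMode, computeRouting, bsize, mnOf, mxOf, rsize,
          extremaSpanSize] at *
        refine ⟨by omega, by omega, ?_, ?_, ?_, hl5, hr5⟩
        · intro d; rw [hl3, hr3]; split_ifs <;> (try contradiction) <;> omega
        · intro d; rw [hl4, hr4]; split_ifs <;> (try contradiction) <;> omega
        · rw [hl3, hl4, hr3, hr4]; split_ifs <;> (try contradiction) <;> omega
      · -- inMode
        obtain ⟨hl1, hl2, hl3, hl4, hl5⟩ := (ihl c).2.2.2
        obtain ⟨hr1, hr2, hr3, hr4, hr5⟩ := (ihr ((postMode l c).2 + 1)).2.1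
        simp only [Spec, inMode, computeRouting, bsize, mnOf, mxOf, rsize,
          extremaSpanSize] at *
        refine ⟨by omega, by omega, ?_, ?_, ?_, hl5, hr5⟩
        · intro d; rw [hl3, hr3]; split_ifs <;> (try contradiction) <;> omega
        · intro d; rw [hl4, hr4]; split_ifs <;> (try contradiction) <;> omega
        · rw [hl3, hl4, hr3, hr4]; split_ifs <;> (try contradiction) <;> omega
      · -- postMode
        obtain ⟨hl1, hl2, hl3, hl4, hl5⟩ := (ihl c).2.2.1
        obtain ⟨hr1, hr2, hr3, hr4, hr5⟩ := (ihr (inMode l c).2).2.2.2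
        simp only [Spec, postMode, computeRouting, bsize, mnOf, mxOf, rsize,
          extremaSpanSize] at *
        refine ⟨by omega, by omega, ?_, ?_, ?_, hl5, hr5⟩
        · intro d; rw [hl3, hr3]; split_ifs <;> (try contradiction) <;> omega
        · intro d; rw [hl4, hr4]; split_ifs <;> (try contradiction) <;> omega
        · rw [hl3, hl4, hr3, hr4]; split_ifs <;> (try contradiction) <;> omega

theorem cycletree_routing_span (t : BTree) (c : Nat) :
    extremaSpanSize (computeRouting (rootMode t c).1) ∧
    extremaSpanSize (computeRouting (preMode t c).1) ∧
    extremaSpanSize (computeRouting (inMode t c).1) ∧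
    extremaSpanSize (computeRouting (postMode t c).1) := by
  obtain ⟨h1, h2, h3, h4⟩ := main_spec t c
  exact ⟨h1.2.2.2.2, h2.2.2.2.2, h3.2.2.2.2, h4.2.2.2.2⟩

end Retreet
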